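/- Suppose the algebraic Riccati equation A^T X + X A − X B B^T X + Q = 0 has a stabilizing solution X ≥ 0 (so A − B B^T X is Hurwitz), Q ≥ 0, and let d > 0 and 0 < ε < 2/d. Then A − B (εd)^{-1} B^T X is also Hurwitz. -/

import Mathlib

set_option linter.unusedSectionVars false
set_option maxHeartbeats 1000000

open Matrix
open scoped ComplexOrder

section helpers
variable {a b k : Type*} [Fintype a] [Fintype b] [Fintype k] [DecidableEq k]

lemma spec_iff_eig (M : Matrix k k ℂ) (μ : ℂ) :
    μ ∈ spectrum ℂ M ↔ ∃ v ≠ 0, M.mulVec v = μ • v := by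
  rw [← AlgEquiv.spectrum_eq (Matrix.toLinAlgEquiv'), ← Module.End.hasEigenvalue_iff_mem_spectrum]
  constructor
  · intro h
    obtain ⟨v, hv⟩ := h.exists_hasEigenvector
    refine ⟨v, hv.2, ?_⟩
    have := Module.End.mem_eigenspace_iff.mp hv.1
    simpa [Matrix.toLinAlgEquiv'_apply, Matrix.toLin'_apply] using this
  · rintro ⟨v, hv0, hv⟩
    refine Module.End.hasEigenvalue_of_hasEigenvector ⟨?_, hv0⟩
    rw [Module.End.mem_eigenspace_iff]
    simpa [Matrix.toLinAlgEquiv'_apply, Matrix.toLin'_apply] using hv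

lemma mapC_mul (M : Matrix a b ℝ) (N : Matrix b k ℝ) :
    (M * N).map Complex.ofReal = M.map Complex.ofReal * N.map Complex.ofReal := by
  ext i j; simp [Matrix.mul_apply]

lemma mapC_add (M N : Matrix a b ℝ) :
    (M + N).map Complex.ofReal = M.map Complex.ofReal + N.map Complex.ofReal := by
  ext i j; simp

lemma mapC_sub (M N : Matrix a b ℝ) :
    (M - N).map Complex.ofReal = M.map Complex.ofReal - N.map Complex.ofReal := by
  ext i j; simp

lemma mapC_neg (M : Matrix a b ℝ) :
    (-M).map Complex.ofReal = -(M.map Complex.ofReal) := by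
  ext i j; simp

lemma mapC_smul (r : ℝ) (M : Matrix a b ℝ) :
    (r • M).map Complex.ofReal = (r : ℂ) • M.map Complex.ofReal := by
  ext i j; simp

lemma mapC_transpose (M : Matrix a b ℝ) :
    (Mᵀ).map Complex.ofReal = (M.map Complex.ofReal)ᵀ := by
  ext i j; simp

lemma mapC_conjTranspose (M : Matrix a b ℝ) :
    (Mᵀ).map Complex.ofReal = (M.map Complex.ofReal)ᴴ := by
  ext i j; simp [Matrix.conjTranspose_apply, Complex.conj_ofReal]

lemma dot_conjT_mul (M : Matrix a b ℂ) (v : b → ℂ) :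
    star v ⬝ᵥ ((Mᴴ * M) *ᵥ v) = star (M *ᵥ v) ⬝ᵥ (M *ᵥ v) := by
  rw [star_mulVec, ← Matrix.dotProduct_mulVec, Matrix.mulVec_mulVec]

lemma real_mulVec_star (M : Matrix a b ℝ) (v : b → ℂ) :
    (M.map Complex.ofReal) *ᵥ (star v) = star ((M.map Complex.ofReal) *ᵥ v) := by
  ext i
  simp [Matrix.mulVec, dotProduct, Complex.conj_ofReal]

end helpers

lemma dot_conjT_mulVec {a b : Type*} [Fintype a] [Fintype b]
    (M : Matrix a b ℂ) (v : b → ℂ) (u : a → ℂ) :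
    star v ⬝ᵥ (Mᴴ *ᵥ u) = star (M *ᵥ v) ⬝ᵥ u := by
  rw [star_mulVec, Matrix.dotProduct_mulVec]

lemma mapC_posSemidef {k : Type*} [Fintype k] [DecidableEq k] {M : Matrix k k ℝ}
    (h : M.PosSemidef) : (M.map Complex.ofReal).PosSemidef := by
  obtain ⟨L, rfl⟩ : ∃ L : Matrix k k ℝ, M = Lᴴ * L := by
    open scoped MatrixOrder Matrix.Norms.L2Operator in
    obtain ⟨L, hL⟩ := CStarAlgebra.nonneg_iff_eq_star_mul_self.mp h.nonneg
    exact ⟨L, hL⟩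
  have hL : (Lᴴ : Matrix k k ℝ) = Lᵀ := by ext i j; simp [Matrix.conjTranspose_apply]
  rw [hL, mapC_mul, mapC_conjTranspose]
  exact Matrix.posSemidef_conjTranspose_mul_self _

open Matrix


/-- All eigenvalues (over ℂ) have negative real part. -/
def Hurwitz {n : Type*} [Fintype n] [DecidableEq n] (M : Matrix n n ℝ) : Prop :=
  ∀ μ ∈ spectrum ℂ (M.map Complex.ofReal), μ.re < 0

/-- If X ≥ 0 is the stabilizing solution of the ARE (A − BBᵀX Hurwitz),
Q ≥ 0, d > 0 and 0 < ε < 2/d, then A − B(εd)⁻¹BᵀX is also Hurwitz. -/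
theorem stmt8 {n m : ℕ} (A : Matrix (Fin n) (Fin n) ℝ) (B : Matrix (Fin n) (Fin m) ℝ)
    (Q X : Matrix (Fin n) (Fin n) ℝ) (hQ : Q.PosSemidef) (hX : X.PosSemidef)
    (hare : Aᵀ * X + X * A - X * B * Bᵀ * X + Q = 0)
    (hH : Hurwitz (A - B * Bᵀ * X))
    (d ε : ℝ) (hd : 0 < d) (hε : 0 < ε) (hεd : ε < 2 / d) :
    Hurwitz (A - (ε * d)⁻¹ • (B * Bᵀ * X)) := by
  intro μ hμ
  by_contra hre
  push_neg at hre
  set c : ℝ := (ε * d)⁻¹ with hcdef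
  have hεd0 : 0 < ε * d := mul_pos hε hd
  have hεd2 : ε * d < 2 := by
    rw [lt_div_iff₀ hd] at hεd; linarith
  have h2c : 1 < 2 * c := by
    rw [hcdef, show (2:ℝ) * (ε*d)⁻¹ = 2/(ε*d) from by ring, lt_div_iff₀ hεd0]; linarith
  have hXT : Xᵀ = X := by
    have := hX.1
    simpa using this.eq
  -- real Lyapunov identity
  have h1 : X * A = (X*(B*(Bᵀ*X)) - Q) - Aᵀ*X := by
    have h0 : Aᵀ*X + X*A - X*(B*(Bᵀ*X)) + Q = 0 := by
      simpa [Matrix.mul_assoc] using hare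
    rw [← sub_eq_zero,
      show X*A - ((X*(B*(Bᵀ*X)) - Q) - Aᵀ*X) = Aᵀ*X + X*A - X*(B*(Bᵀ*X)) + Q from by abel]
    exact h0
  have key : (A - c • (B*Bᵀ*X))ᵀ * X + X * (A - c • (B*Bᵀ*X))
      = -(Q + (2*c-1) • (X*(B*(Bᵀ*X)))) := by
    simp only [transpose_sub, transpose_smul, transpose_mul, transpose_transpose, hXT,
      Matrix.sub_mul, Matrix.mul_sub, Matrix.smul_mul, Matrix.mul_smul, Matrix.mul_assoc]
    rw [h1]
    module
  -- complexify
  set Ac := A.map Complex.ofReal with hAc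
  set Bc := B.map Complex.ofReal with hBc
  set Xc := X.map Complex.ofReal with hXc
  set Qc := Q.map Complex.ofReal with hQc
  have hmap : (A - (ε*d)⁻¹ • (B*Bᵀ*X)).map Complex.ofReal
      = Ac - (c:ℂ) • (Bc * Bcᵀ * Xc) := by
    rw [← hcdef, mapC_sub, mapC_smul, mapC_mul, mapC_mul, mapC_transpose]
  rw [hmap] at hμ
  obtain ⟨v, hv0, hv⟩ := (spec_iff_eig _ μ).mp hμ
  set w := (Bcᵀ * Xc) *ᵥ v with hwdef
  set s := star v ⬝ᵥ (Xc *ᵥ v) with hsdef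
  set q := star v ⬝ᵥ (Qc *ᵥ v) with hqdef
  set p := star w ⬝ᵥ w with hpdef
  set Mc := Ac - (c:ℂ) • (Bc * Bcᵀ * Xc) with hMc
  have hMcH : ((A - c • (B*Bᵀ*X))ᵀ).map Complex.ofReal = Mcᴴ := by
    rw [mapC_conjTranspose, hmap]
  have keyC : Mcᴴ * Xc + Xc * Mc
      = -(Qc + ((2*c-1 : ℝ):ℂ) • (Xc * (Bc * (Bcᵀ * Xc)))) := by
    have h2 := congrArg (fun M => M.map Complex.ofReal) key
    simp only [mapC_add, mapC_mul, mapC_neg, mapC_smul, hMcH, hmap] at h2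
    rw [hcdef, hmap] at h2
    exact h2
  have hdot := congrArg (fun M => star v ⬝ᵥ (M *ᵥ v)) keyC
  simp only [Matrix.add_mulVec, Matrix.neg_mulVec, dotProduct_add, dotProduct_neg,
    Matrix.smul_mulVec, dotProduct_smul, ← Matrix.mulVec_mulVec] at hdot
  -- left terms
  have hterm1 : star v ⬝ᵥ (Mcᴴ *ᵥ (Xc *ᵥ v)) = (starRingEnd ℂ μ) * s := by
    rw [dot_conjT_mulVec, hv, star_smul, smul_dotProduct]
    simp [hsdef]
  have hterm2 : star v ⬝ᵥ (Xc *ᵥ (Mc *ᵥ v)) = μ * s := by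
    rw [hv, Matrix.mulVec_smul, dotProduct_smul]
    simp [hsdef]
  have hterm3 : star v ⬝ᵥ (Xc *ᵥ (Bc *ᵥ (Bcᵀ *ᵥ (Xc *ᵥ v)))) = p := by
    have hXch : Xc = Xcᴴ := by rw [hXc, ← mapC_conjTranspose, hXT]
    have hBch : Bc = (Bcᵀ)ᴴ := by
      rw [hBc, ← mapC_transpose, ← mapC_conjTranspose, transpose_transpose]
    calc star v ⬝ᵥ (Xc *ᵥ (Bc *ᵥ (Bcᵀ *ᵥ (Xc *ᵥ v))))
        = star v ⬝ᵥ ((Bcᵀ * Xc)ᴴ *ᵥ ((Bcᵀ * Xc) *ᵥ v)) := by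
          rw [Matrix.conjTranspose_mul, ← hXch, ← hBch]
          simp only [Matrix.mulVec_mulVec]
          rw [Matrix.mul_assoc]
      _ = star ((Bcᵀ * Xc) *ᵥ v) ⬝ᵥ ((Bcᵀ * Xc) *ᵥ v) := dot_conjT_mulVec _ _ _
      _ = p := rfl
  rw [hterm1, hterm2, hterm3, smul_eq_mul, ← hqdef] at hdot
  -- positivity facts
  have hXcPS := mapC_posSemidef hX
  have hQcPS := mapC_posSemidef hQ
  have hs0 : 0 ≤ s := hXcPS.dotProduct_mulVec_nonneg v
  have hq0 : 0 ≤ q := hQcPS.dotProduct_mulVec_nonneg v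
  have hp0 : 0 ≤ p := dotProduct_star_self_nonneg w
  have hsim : s.im = 0 := ((Complex.le_def.mp hs0).2).symm
  have hqim : q.im = 0 := ((Complex.le_def.mp hq0).2).symm
  have hpim : p.im = 0 := ((Complex.le_def.mp hp0).2).symm
  have hsre : 0 ≤ s.re := by simpa using (Complex.le_def.mp hs0).1
  have hqre : 0 ≤ q.re := by simpa using (Complex.le_def.mp hq0).1
  have hpre0 : 0 ≤ p.re := by simpa using (Complex.le_def.mp hp0).1
  have hre' := congrArg Complex.re hdot
  simp only [Complex.add_re, Complex.mul_re, Complex.neg_re, Complex.conj_re, Complex.conj_im,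
    Complex.ofReal_re, Complex.ofReal_im, hsim, hqim, hpim, mul_zero, zero_mul, sub_zero,
    neg_zero] at hre'
  -- hre' : μ.re * s.re + μ.re * s.re = -(q.re + (2*c-1) * p.re)
  have hp_eq : p.re = 0 := by nlinarith [mul_nonneg hre hsre]
  have hp_zero : p = 0 := by
    apply Complex.ext <;> simp [hp_eq, hpim]
  have hw : w = 0 := dotProduct_star_self_eq_zero.mp hp_zero
  -- conclude
  have hAv : Ac *ᵥ v = μ • v := by
    have h3 := hv
    rw [hMc, Matrix.sub_mulVec, Matrix.smul_mulVec, Matrix.mul_assoc Bc Bcᵀ Xc,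
      ← Matrix.mulVec_mulVec, ← hwdef, hw, Matrix.mulVec_zero, smul_zero, sub_zero] at h3
    exact h3
  have hv2 : ((A - B*Bᵀ*X).map Complex.ofReal) *ᵥ v = μ • v := by
    rw [mapC_sub, mapC_mul, mapC_mul, mapC_transpose, Matrix.sub_mulVec, ← hAc, ← hBc, ← hXc,
      Matrix.mul_assoc Bc Bcᵀ Xc, ← Matrix.mulVec_mulVec, ← hwdef, hw, Matrix.mulVec_zero, sub_zero]
    exact hAv
  have := hH μ ((spec_iff_eig _ μ).mpr ⟨v, hv0, hv2⟩)
  linarith
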